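/- arXiv:1404.6781 — 6 statements merged into one kernel-verified Lean document; each statement's English description precedes it below -/
import Mathlib

section
/- If a set of rules R is a generating set of a logic program P and S = head(R) is consistent, then R equals the set of rules of P whose positive body is contained in S and whose negative body is disjoint from S. -/
/-- A literal over atoms `A`: `(true, a)` is the atom `a`, `(false, a)` is `¬ a`. -/
abbrev Lit (A : Type) := Bool × A

/-- A rule with head, positive body and negative body. -/
structure Rule (A : Type) where
  head : Lit A
  pos : Set (Lit A)
  neg : Set (Lit A)

variable {A : Type}

/-- Heads of a set of rules. -/
def headSet (R : Set (Rule A)) : Set (Lit A) := Rule.head '' R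

/-- `R ⊆ P` positively satisfies `P`. -/
def PosSat (P R : Set (Rule A)) : Prop :=
  R ⊆ P ∧ ∀ r ∈ P, r.pos ⊆ headSet R → r ∈ R

/-- The minimal set of rules positively satisfying `P`. -/
def MP (P : Set (Rule A)) : Set (Rule A) := ⋂₀ {R | PosSat P R}

/-- A set of rules defeats a rule. -/
def defeatsRule (R : Set (Rule A)) (r : Rule A) : Prop :=
  (headSet R ∩ r.neg).Nonempty

/-- A set of rules defeats a set of rules. -/
def defeatsSet (R₁ R₂ : Set (Rule A)) : Prop := ∃ r ∈ R₂, defeatsRule R₁ r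

/-- The reduct `P^R` removes each rule defeated by `R`. -/
def reduct (P R : Set (Rule A)) : Set (Rule A) := {r ∈ P | ¬ defeatsRule R r}

/-- `R ⊆ P` is a generating set of `P` iff `R = MP (P^R)`. -/
def GenSet (P R : Set (Rule A)) : Prop := R ⊆ P ∧ R = MP (reduct P R)

/-- A set of literals is consistent iff it contains no complementary pair. -/
def Consistent (S : Set (Lit A)) : Prop :=
  ∀ a : A, ¬ (((true, a) ∈ S) ∧ ((false, a) ∈ S))

/-- Answer sets via generating sets. -/
def AnswerSet (P : Set (Rule A)) (S : Set (Lit A)) : Prop :=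
  Consistent S ∧ ∃ R, GenSet P R ∧ headSet R = S

/-- `Γ_S(P)`: rules whose positive body is in `S` and negative body disjoint from `S`. -/
def Gamma (S : Set (Lit A)) (P : Set (Rule A)) : Set (Rule A) :=
  {r ∈ P | r.pos ⊆ S ∧ r.neg ∩ S = ∅}

/-- Fragments of a program. -/
def Frag (P : Set (Rule A)) : Set (Set (Rule A)) := {R | R ⊆ P ∧ MP R = R}

/-- Fragment reduct: remove fragments defeated by a member of `E`. -/
def fragReduct (P : Set (Rule A)) (E : Set (Set (Rule A))) : Set (Set (Rule A)) :=
  {X ∈ Frag P | ¬ ∃ Y ∈ E, defeatsSet Y X}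

/-- Stable fragment sets. -/
def StableFragSet (P : Set (Rule A)) (E : Set (Set (Rule A))) : Prop :=
  E ⊆ Frag P ∧ fragReduct P E = E

/-- Mutually defeating (conflicting) sets of rules. -/
def Conflicting (X Y : Set (Rule A)) : Prop := defeatsSet X Y ∧ defeatsSet Y X

/-- `X` overrides `Y` w.r.t. the preference relation `lt`. -/
def Overrides (lt : Rule A → Rule A → Prop) (X Y : Set (Rule A)) : Prop :=
  Conflicting X Y ∧
    ∀ r₁ ∈ X, defeatsRule Y r₁ → ∃ r₂ ∈ Y, defeatsRule X r₂ ∧ lt r₂ r₁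

/-- Preferred fragment reduct (semantics G). -/
def prefFragReduct (lt : Rule A → Rule A → Prop) (P : Set (Rule A))
    (E : Set (Set (Rule A))) : Set (Set (Rule A)) :=
  {X ∈ Frag P | ¬ ∃ Y ∈ E, defeatsSet Y X ∧ ¬ Overrides lt X Y}

/-- Preferred stable fragment sets (semantics G). -/
def PrefStableFragSet (lt : Rule A → Rule A → Prop) (P : Set (Rule A))
    (E : Set (Set (Rule A))) : Prop :=
  E ⊆ Frag P ∧ prefFragReduct lt P E = E

/-- Preferred answer sets under the fragment-based semantics G. -/
def GPrefAnswerSet (lt : Rule A → Rule A → Prop) (P : Set (Rule A))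
    (S : Set (Lit A)) : Prop :=
  Consistent S ∧ ∃ E, PrefStableFragSet lt P E ∧ headSet (⋃₀ E) = S

/-- `T(r,R)` for semantics GNO. -/
def Trules (lt : Rule A → Rule A → Prop) (r : Rule A) (R : Set (Rule A)) :
    Set (Rule A) :=
  MP {p ∈ R | ¬ lt p r}

/-- GNO reduct: remove rules `r` with `body⁻(r) ∩ head(T(r,R)) ≠ ∅`. -/
def gnoReduct (lt : Rule A → Rule A → Prop) (P R : Set (Rule A)) : Set (Rule A) :=
  {r ∈ P | ¬ (r.neg ∩ headSet (Trules lt r R)).Nonempty}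

/-- GNO-preferred generating sets. -/
def GNOPrefGen (lt : Rule A → Rule A → Prop) (P R : Set (Rule A)) : Prop :=
  GenSet P R ∧ R = MP (gnoReduct lt P R)

/-- GNO-preferred answer sets. -/
def GNOPrefAnswerSet (lt : Rule A → Rule A → Prop) (P : Set (Rule A))
    (S : Set (Lit A)) : Prop :=
  Consistent S ∧ ∃ R, GNOPrefGen lt P R ∧ headSet R = S

/-- A rule defeats a rule. -/
def defeats (r₁ r₂ : Rule A) : Prop := r₁.head ∈ r₂.neg

/-- `r₁` directly overrides `r₂` w.r.t. `lt`. -/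
def DirOverrides (lt : Rule A → Rule A → Prop) (r₁ r₂ : Rule A) : Prop :=
  (defeats r₁ r₂ ∧ defeats r₂ r₁) ∧ lt r₂ r₁

/-- D-reduct for the direct-conflict semantics. -/
def dReduct (lt : Rule A → Rule A → Prop) (P R : Set (Rule A)) : Set (Rule A) :=
  {r₁ ∈ P | ¬ ∃ r₂ ∈ R, defeats r₂ r₁ ∧ ¬ DirOverrides lt r₁ r₂}

/-- D-preferred generating sets. -/
def DPrefGen (lt : Rule A → Rule A → Prop) (P R : Set (Rule A)) : Prop :=
  R = MP (dReduct lt P R)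

/-- D-preferred answer sets. -/
def DPrefAnswerSet (lt : Rule A → Rule A → Prop) (P : Set (Rule A))
    (S : Set (Lit A)) : Prop :=
  Consistent S ∧ ∃ R, DPrefGen lt P R ∧ headSet R = S

/-- Stratified programs. -/
def Stratified (P : Set (Rule A)) : Prop :=
  ∃ lam : Lit A → ℕ, ∀ r ∈ P,
    (∀ l ∈ r.pos, lam l ≤ lam r.head) ∧ (∀ l ∈ r.neg, lam l < lam r.head)

lemma headSet_mono {R T : Set (Rule A)} (h : R ⊆ T) : headSet R ⊆ headSet T :=
  Set.image_mono h

lemma posSat_MP (Q : Set (Rule A)) : PosSat Q (MP Q) := by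
  have hQ : PosSat Q Q := ⟨subset_rfl, fun r hr _ => hr⟩
  constructor
  · exact fun r hr => (Set.mem_sInter.mp hr) Q hQ
  · intro r hr hpos
    intro T hT
    exact hT.2 r hr (hpos.trans (headSet_mono (Set.sInter_subset_of_mem hT)))

lemma MP_pos_subset (Q : Set (Rule A)) : ∀ r ∈ MP Q, r.pos ⊆ headSet (MP Q) := by
  intro r hr
  have hQ := posSat_MP Q
  set R' : Set (Rule A) := {r ∈ MP Q | r.pos ⊆ headSet (MP Q)} with hR'
  have hR'sat : PosSat Q R' := by
    constructor
    · exact fun x hx => hQ.1 hx.1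
    · intro x hx hpos
      have hsub : headSet R' ⊆ headSet (MP Q) :=
        headSet_mono (fun y hy => hy.1)
      have hx' : x ∈ MP Q := hQ.2 x hx (hpos.trans hsub)
      exact ⟨hx', hpos.trans hsub⟩
  have : MP Q ⊆ R' := Set.sInter_subset_of_mem hR'sat
  exact (this hr).2

/-- if `R` is a generating set of `P` and `S = head(R)` is consistent,
then `R = Γ_S(P)`. -/
theorem generating_set_eq_gamma (P R : Set (Rule A)) (hP : P.Finite)
    (hgen : GenSet P R) (hcons : Consistent (headSet R)) :
    R = Gamma (headSet R) P := by
  obtain ⟨hRP, hR⟩ := hgen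
  have hsat := posSat_MP (reduct P R)
  apply Set.eq_of_subset_of_subset
  · intro r hr
    have hrMP : r ∈ MP (reduct P R) := hR ▸ hr
    have hred : r ∈ reduct P R := hsat.1 hrMP
    refine ⟨hRP hr, ?_, ?_⟩
    · have := MP_pos_subset (reduct P R) r hrMP
      rwa [← hR] at this
    · by_contra h
      apply hred.2
      unfold defeatsRule
      rw [Set.inter_comm]
      exact Set.nonempty_iff_ne_empty.mpr h
  · rintro r ⟨hrP, hpos, hneg⟩
    have hred : r ∈ reduct P R := by
      refine ⟨hrP, fun hd => ?_⟩
      unfold defeatsRule at hd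
      rw [Set.inter_comm, hneg] at hd
      exact Set.not_nonempty_empty hd
    have : r ∈ MP (reduct P R) := hsat.2 r hred (by rwa [← hR])
    rwa [← hR] at this
end

section
/- For fragments X, Y of a logic program with preference relation <, if X overrides Y w.r.t. <, then Y does not override X w.r.t. <. -/
variable {A : Type}

/-- overriding between fragments is asymmetric. -/
theorem overrides_asymm (P : Set (Rule A)) (hP : P.Finite)
    (lt : Rule A → Rule A → Prop) (htrans : Transitive lt)
    (hasymm : ∀ r₁ r₂, lt r₁ r₂ → ¬ lt r₂ r₁)
    (X Y : Set (Rule A)) (hX : X ∈ Frag P) (hY : Y ∈ Frag P)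
    (h : Overrides lt X Y) : ¬ Overrides lt Y X := by
  intro h'
  -- the set of rules involved in mutual defeats
  set S : Set (Rule A) :=
    {r | (r ∈ X ∧ defeatsRule Y r) ∨ (r ∈ Y ∧ defeatsRule X r)} with hS
  have hSsub : S ⊆ P := by
    rintro r (⟨hr, _⟩ | ⟨hr, _⟩)
    · exact hX.1 hr
    · exact hY.1 hr
  have hSfin : S.Finite := hP.subset hSsub
  -- every element of S has a lt-smaller element of S
  have step : ∀ r ∈ S, ∃ r' ∈ S, lt r' r := by
    rintro r (⟨hrX, hrD⟩ | ⟨hrY, hrD⟩)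
    · obtain ⟨r₂, hr₂Y, hr₂D, hlt⟩ := h.2 r hrX hrD
      exact ⟨r₂, Or.inr ⟨hr₂Y, hr₂D⟩, hlt⟩
    · obtain ⟨r₂, hr₂X, hr₂D, hlt⟩ := h'.2 r hrY hrD
      exact ⟨r₂, Or.inl ⟨hr₂X, hr₂D⟩, hlt⟩
  -- S is nonempty
  obtain ⟨r₀, hr₀X, hr₀D⟩ := h.1.2
  have hr₀S : r₀ ∈ S := Or.inl ⟨hr₀X, hr₀D⟩
  -- well-foundedness on the finite set S
  haveI : IsTrans (Rule A) lt := ⟨fun _ _ _ hab hbc => htrans hab hbc⟩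
  haveI : IsIrrefl (Rule A) lt := ⟨fun a ha => hasymm a a ha ha⟩
  haveI : IsStrictOrder (Rule A) lt := ⟨⟩
  have hwf : S.WellFoundedOn lt := hSfin.wellFoundedOn
  obtain ⟨⟨m, hmS⟩, -, hmin⟩ :=
    hwf.has_min Set.univ ⟨⟨r₀, hr₀S⟩, trivial⟩
  obtain ⟨r', hr'S, hlt⟩ := step m hmS
  exact hmin ⟨r', hr'S⟩ trivial hlt
end

section
/- Every preferred stable fragment set of a logic program with preferences (P,<) is a stable fragment set of P. -/
variable {A : Type}

/-- every preferred stable fragment set of `(P,<)` is a stable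
fragment set of `P`. -/
theorem prefStableFragSet_is_stableFragSet (P : Set (Rule A)) (hP : P.Finite)
    (lt : Rule A → Rule A → Prop) (htrans : Transitive lt)
    (hasymm : ∀ r₁ r₂, lt r₁ r₂ → ¬ lt r₂ r₁)
    (E : Set (Set (Rule A))) (h : PrefStableFragSet lt P E) :
    StableFragSet P E := by
  obtain ⟨hE, hfix⟩ := h
  refine ⟨hE, ?_⟩
  ext X
  constructor
  · rintro ⟨hXF, hnd⟩
    rw [← hfix]
    exact ⟨hXF, fun ⟨Y, hY, hd, _⟩ => hnd ⟨Y, hY, hd⟩⟩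
  · intro hXE
    have hX' : X ∈ prefFragReduct lt P E := by rw [hfix]; exact hXE
    obtain ⟨hXF, hnd⟩ := hX'
    refine ⟨hXF, ?_⟩
    rintro ⟨Y, hYE, hdYX⟩
    have hov : Overrides lt X Y := by
      by_contra hno; exact hnd ⟨Y, hYE, hdYX, hno⟩
    have hdXY : defeatsSet X Y := hov.1.1
    have hY' : Y ∈ prefFragReduct lt P E := by rw [hfix]; exact hYE
    have hov' : Overrides lt Y X := by
      by_contra hno; exact hY'.2 ⟨X, hXE, hdXY, hno⟩
    set S : Set (Rule A) :=
      {r | (r ∈ X ∧ defeatsRule Y r) ∨ (r ∈ Y ∧ defeatsRule X r)} with hS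
    have hSP : S ⊆ P := by
      rintro r (⟨hr, _⟩ | ⟨hr, _⟩)
      · exact hXF.1 hr
      · exact (hE hYE).1 hr
    have hSfin : S.Finite := hP.subset hSP
    have hstep : ∀ r ∈ S, ∃ r' ∈ S, lt r' r := by
      rintro r (⟨hr, hd⟩ | ⟨hr, hd⟩)
      · obtain ⟨r', hr', hd', hlt⟩ := hov.2 r hr hd
        exact ⟨r', Or.inr ⟨hr', hd'⟩, hlt⟩
      · obtain ⟨r', hr', hd', hlt⟩ := hov'.2 r hr hd
        exact ⟨r', Or.inl ⟨hr', hd'⟩, hlt⟩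
    obtain ⟨r0, hr0X, hr0d⟩ := hdYX
    have hr0S : r0 ∈ S := Or.inl ⟨hr0X, hr0d⟩
    haveI : IsIrrefl (Rule A) lt := ⟨fun a ha => hasymm a a ha ha⟩
    haveI : IsTrans (Rule A) lt := ⟨htrans⟩
    haveI : IsStrictOrder (Rule A) lt := ⟨⟩
    have hwf : S.WellFoundedOn lt := hSfin.wellFoundedOn
    obtain ⟨⟨m, hmS⟩, _, hmin⟩ :=
      hwf.has_min Set.univ ⟨⟨r0, hr0S⟩, trivial⟩
    obtain ⟨r', hr'S, hlt⟩ := hstep m hmS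
    exact hmin ⟨r', hr'S⟩ trivial hlt
end

section
/- Every preferred answer set of a logic program with preferences (P,<) under the fragment-based semantics (semantics G) is an answer set of P. -/
variable {A : Type}

section AuxLemmas

lemma posSat_self (X : Set (Rule A)) : PosSat X X := ⟨subset_rfl, fun r hr _ => hr⟩

lemma mp_subset (X : Set (Rule A)) : MP X ⊆ X := Set.sInter_subset_of_mem (posSat_self X)

lemma mp_min {X R : Set (Rule A)} (h : PosSat X R) : MP X ⊆ R := Set.sInter_subset_of_mem h

lemma posSat_mp (X : Set (Rule A)) : PosSat X (MP X) := by
  refine ⟨mp_subset X, fun r hr hpos => ?_⟩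
  refine Set.mem_sInter.2 (fun R hR => ?_)
  exact hR.2 r hr (hpos.trans (Set.image_mono (Set.sInter_subset_of_mem hR)))

lemma mp_mono {X Y : Set (Rule A)} (hXY : X ⊆ Y) : MP X ⊆ MP Y := by
  have h : PosSat X (MP Y ∩ X) := by
    refine ⟨Set.inter_subset_right, fun r hr hpos => ?_⟩
    exact ⟨(posSat_mp Y).2 r (hXY hr)
      (hpos.trans (Set.image_mono Set.inter_subset_left)), hr⟩
  exact (mp_min h).trans Set.inter_subset_left

lemma mp_idem (X : Set (Rule A)) : MP (MP X) = MP X := by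
  apply Set.Subset.antisymm (mp_subset _)
  have h : PosSat X (MP (MP X)) := by
    refine ⟨(mp_subset _).trans (mp_subset X), fun r hr hpos => ?_⟩
    have h1 : r ∈ MP X :=
      (posSat_mp X).2 r hr (hpos.trans (Set.image_mono (mp_subset (MP X))))
    exact (posSat_mp (MP X)).2 r h1 hpos
  exact mp_min h

lemma no_mutual_override {P : Set (Rule A)} (hP : P.Finite)
    {lt : Rule A → Rule A → Prop} (htrans : Transitive lt)
    (hasymm : ∀ r₁ r₂, lt r₁ r₂ → ¬ lt r₂ r₁)
    {X Y : Set (Rule A)} (hX : X ⊆ P) (hY : Y ⊆ P)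
    (h1 : Overrides lt X Y) (h2 : Overrides lt Y X) : False := by
  set Inv : Rule A → Prop :=
    fun r => (r ∈ X ∧ defeatsRule Y r) ∨ (r ∈ Y ∧ defeatsRule X r) with hInvDef
  have key : ∀ r, Inv r → ∃ r', Inv r' ∧ lt r' r := by
    rintro r (⟨hrX, hd⟩ | ⟨hrY, hd⟩)
    · obtain ⟨r₂, hr₂Y, hdef, hlt⟩ := h1.2 r hrX hd
      exact ⟨r₂, Or.inr ⟨hr₂Y, hdef⟩, hlt⟩
    · obtain ⟨r₂, hr₂X, hdef, hlt⟩ := h2.2 r hrY hd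
      exact ⟨r₂, Or.inl ⟨hr₂X, hdef⟩, hlt⟩
  obtain ⟨r₀, hr₀X, hd₀⟩ := h1.1.2
  let f : ℕ → {r : Rule A // Inv r} := fun n =>
    Nat.rec ⟨r₀, Or.inl ⟨hr₀X, hd₀⟩⟩
      (fun _ p => ⟨Classical.choose (key p.1 p.2),
        (Classical.choose_spec (key p.1 p.2)).1⟩) n
  have hstep : ∀ n, lt (f (n + 1)).1 (f n).1 := fun n =>
    (Classical.choose_spec (key (f n).1 (f n).2)).2
  have hdesc : ∀ m n, m < n → lt (f n).1 (f m).1 := by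
    intro m n hmn
    induction n with
    | zero => omega
    | succ k ih =>
      rcases Nat.lt_succ_iff_lt_or_eq.mp hmn with h | h
      · exact htrans (hstep k) (ih h)
      · rw [h]; exact hstep k
  have hne : ∀ m n, m < n → (f m).1 ≠ (f n).1 := by
    intro m n h heq
    have hlt := hdesc m n h
    rw [← heq] at hlt
    exact hasymm _ _ hlt hlt
  have hinj : Function.Injective (fun n => (f n).1) := by
    intro m n heq
    rcases lt_trichotomy m n with h | h | h
    · exact absurd heq (hne m n h)
    · exact h
    · exact absurd heq.symm (hne n m h)
  have hmem : ∀ n, (f n).1 ∈ P := by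
    intro n
    rcases (f n).2 with h | h
    · exact hX h.1
    · exact hY h.1
  exact (Set.infinite_of_injective_forall_mem hinj hmem) hP

end AuxLemmas

/-- every G-preferred answer set of `(P,<)` is an answer set of `P`. -/
theorem gPref_is_answerSet (P : Set (Rule A)) (hP : P.Finite)
    (lt : Rule A → Rule A → Prop) (htrans : Transitive lt)
    (hasymm : ∀ r₁ r₂, lt r₁ r₂ → ¬ lt r₂ r₁)
    (S : Set (Lit A)) (h : GPrefAnswerSet lt P S) : AnswerSet P S := by
  obtain ⟨hcons, E, ⟨hEfrag, hEfix⟩, hhead⟩ := h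
  have hEsub : ∀ X ∈ E, X ⊆ P := fun X hX => (hEfrag hX).1
  -- no member of E defeats another member of E
  have hnodef : ∀ X ∈ E, ∀ Y ∈ E, ¬ defeatsSet Y X := by
    intro X hX Y hY hdef
    have hX' : X ∈ prefFragReduct lt P E := by rw [hEfix]; exact hX
    have hOXY : Overrides lt X Y := by
      by_contra hno
      exact hX'.2 ⟨Y, hY, hdef, hno⟩
    have hdefXY : defeatsSet X Y := hOXY.1.1
    have hY' : Y ∈ prefFragReduct lt P E := by rw [hEfix]; exact hY
    have hOYX : Overrides lt Y X := by
      by_contra hno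
      exact hY'.2 ⟨X, hX, hdefXY, hno⟩
    exact no_mutual_override hP htrans hasymm (hEsub X hX) (hEsub Y hY) hOXY hOYX
  have hheadsub : ∀ Y ∈ E, headSet Y ⊆ S := fun Y hY =>
    hhead ▸ Set.image_mono (Set.subset_sUnion_of_mem hY)
  -- negative bodies of rules in E are disjoint from S
  have hnegS : ∀ X ∈ E, ∀ r ∈ X, r.neg ∩ S = ∅ := by
    intro X hX r hr
    by_contra hne
    obtain ⟨l, hlneg, hlS⟩ := Set.nonempty_iff_ne_empty.2 hne
    rw [← hhead] at hlS
    obtain ⟨r', hr'mem, hhd⟩ := hlS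
    obtain ⟨Y, hY, hr'Y⟩ := hr'mem
    exact hnodef X hX Y hY ⟨r, hr, ⟨l, ⟨r', hr'Y, hhd⟩, hlneg⟩⟩
  set Q : Set (Rule A) := {r ∈ P | r.neg ∩ S = ∅} with hQdef
  have hUQ : ⋃₀ E ⊆ Q := by
    rintro r ⟨X, hX, hrX⟩
    exact ⟨hEsub X hX hrX, hnegS X hX r hrX⟩
  have hUMP : ⋃₀ E ⊆ MP Q := by
    rintro r ⟨X, hX, hrX⟩
    have hfix : MP X = X := (hEfrag hX).2
    rw [← hfix] at hrX
    exact mp_mono ((Set.subset_sUnion_of_mem hX).trans hUQ) hrX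
  have hMQE : MP Q ∈ E := by
    rw [← hEfix]
    refine ⟨⟨(mp_subset Q).trans (fun r hr => hr.1), mp_idem Q⟩, ?_⟩
    rintro ⟨Y, hY, ⟨r, hrMQ, l, hlY, hlneg⟩, -⟩
    have hrQ : r ∈ Q := mp_subset Q hrMQ
    have hmem : l ∈ r.neg ∩ S := ⟨hlneg, hheadsub Y hY hlY⟩
    rw [hrQ.2] at hmem
    exact absurd hmem (Set.notMem_empty l)
  have hUeq : ⋃₀ E = MP Q :=
    Set.Subset.antisymm hUMP (Set.subset_sUnion_of_mem hMQE)
  have hred : reduct P (⋃₀ E) = Q := by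
    ext r
    constructor
    · rintro ⟨hrP, hnd⟩
      refine ⟨hrP, ?_⟩
      by_contra hne
      obtain ⟨l, hlneg, hlS⟩ := Set.nonempty_iff_ne_empty.2 hne
      rw [← hhead] at hlS
      exact hnd ⟨l, hlS, hlneg⟩
    · rintro ⟨hrP, hemp⟩
      refine ⟨hrP, ?_⟩
      rintro ⟨l, hlH, hlneg⟩
      have hmem : l ∈ r.neg ∩ S := ⟨hlneg, hhead ▸ hlH⟩
      rw [hemp] at hmem
      exact absurd hmem (Set.notMem_empty l)
  refine ⟨hcons, ⋃₀ E, ⟨fun r hr => ?_, ?_⟩, hhead⟩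
  · obtain ⟨X, hX, hrX⟩ := hr
    exact hEsub X hX hrX
  · rw [hred]
    exact hUeq
end

section
/- The fragment-based semantics G is anti-monotone in preferences: if <1 ⊆ <2 are two preference relations on the same program P, then every preferred answer set of (P, <2) is a preferred answer set of (P, <1). -/
variable {A : Type}

/-- In a preferred stable fragment set (for a finite program and a strict-order
preference), no member defeats another member. -/
lemma stable_no_defeat {P : Set (Rule A)} (hP : P.Finite)
    {lt : Rule A → Rule A → Prop}
    (htrans : Transitive lt) (hasymm : ∀ r₁ r₂, lt r₁ r₂ → ¬ lt r₂ r₁)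
    {E : Set (Set (Rule A))} (hE : PrefStableFragSet lt P E)
    {X Y : Set (Rule A)} (hX : X ∈ E) (hY : Y ∈ E)
    (hd : defeatsSet Y X) : False := by
  have hXP : X ⊆ P := (hE.1 hX).1
  have hYP : Y ⊆ P := (hE.1 hY).1
  -- X overrides Y
  have hXmem : X ∈ prefFragReduct lt P E := hE.2.ge hX
  have hOXY : Overrides lt X Y := by
    by_contra hc
    exact hXmem.2 ⟨Y, hY, hd, hc⟩
  have hd' : defeatsSet X Y := hOXY.1.1
  have hYmem : Y ∈ prefFragReduct lt P E := hE.2.ge hY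
  have hOYX : Overrides lt Y X := by
    by_contra hc
    exact hYmem.2 ⟨X, hX, hd', hc⟩
  -- the set of "conflict" rules
  set D : Set (Rule A) :=
    {r | (r ∈ X ∧ defeatsRule Y r) ∨ (r ∈ Y ∧ defeatsRule X r)} with hD
  have hDP : D ⊆ P := by
    rintro r (⟨hr, -⟩ | ⟨hr, -⟩)
    · exact hXP hr
    · exact hYP hr
  have hDfin : D.Finite := hP.subset hDP
  obtain ⟨r0, hr0X, hr0d⟩ := hd
  have hr0D : r0 ∈ D := Or.inl ⟨hr0X, hr0d⟩
  haveI : IsTrans (Rule A) lt := ⟨htrans⟩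
  haveI : IsIrrefl (Rule A) lt := ⟨fun a ha => hasymm a a ha ha⟩
  haveI : IsStrictOrder (Rule A) lt := ⟨⟩
  have hwf : D.WellFoundedOn lt := hDfin.wellFoundedOn
  obtain ⟨m, -, hmin⟩ :=
    (hwf : WellFounded fun a b : D => lt a b).has_min Set.univ
      ⟨⟨r0, hr0D⟩, Set.mem_univ _⟩
  rcases m.2 with hm | hm
  · obtain ⟨r₂, hr₂Y, hr₂d, hlt⟩ := hOXY.2 m hm.1 hm.2
    exact hmin ⟨r₂, Or.inr ⟨hr₂Y, hr₂d⟩⟩ (Set.mem_univ _) hlt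
  · obtain ⟨r₂, hr₂X, hr₂d, hlt⟩ := hOYX.2 m hm.1 hm.2
    exact hmin ⟨r₂, Or.inl ⟨hr₂X, hr₂d⟩⟩ (Set.mem_univ _) hlt

/-- Overriding is monotone in the preference relation. -/
lemma overrides_mono {lt₁ lt₂ : Rule A → Rule A → Prop}
    (hsub : ∀ r₁ r₂, lt₁ r₁ r₂ → lt₂ r₁ r₂) {X Y : Set (Rule A)}
    (h : Overrides lt₁ X Y) : Overrides lt₂ X Y := by
  refine ⟨h.1, fun r₁ hr₁ hd => ?_⟩
  obtain ⟨r₂, hr₂, hd₂, hlt⟩ := h.2 r₁ hr₁ hd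
  exact ⟨r₂, hr₂, hd₂, hsub _ _ hlt⟩

/-- semantics G is anti-monotone in preferences. -/
theorem gPref_antimono (P : Set (Rule A)) (hP : P.Finite)
    (lt₁ lt₂ : Rule A → Rule A → Prop)
    (htrans₁ : Transitive lt₁) (hasymm₁ : ∀ r₁ r₂, lt₁ r₁ r₂ → ¬ lt₁ r₂ r₁)
    (htrans₂ : Transitive lt₂) (hasymm₂ : ∀ r₁ r₂, lt₂ r₁ r₂ → ¬ lt₂ r₂ r₁)
    (hsub : ∀ r₁ r₂, lt₁ r₁ r₂ → lt₂ r₁ r₂)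
    (S : Set (Lit A)) (h : GPrefAnswerSet lt₂ P S) :
    GPrefAnswerSet lt₁ P S := by
  obtain ⟨hcons, E, hE, hhead⟩ := h
  refine ⟨hcons, E, ⟨hE.1, ?_⟩, hhead⟩
  apply Set.Subset.antisymm
  · -- prefFragReduct lt₁ P E ⊆ E
    intro X hXmem
    have hno₂ : ¬ ∃ Y ∈ E, defeatsSet Y X ∧ ¬ Overrides lt₂ X Y := by
      rintro ⟨Y, hY, hd, hno⟩
      have hO₁ : Overrides lt₁ X Y := by
        by_contra hc
        exact hXmem.2 ⟨Y, hY, hd, hc⟩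
      exact hno (overrides_mono hsub hO₁)
    exact hE.2 ▸ (⟨hXmem.1, hno₂⟩ : X ∈ prefFragReduct lt₂ P E)
  · -- E ⊆ prefFragReduct lt₁ P E
    intro X hX
    refine ⟨hE.1 hX, ?_⟩
    rintro ⟨Y, hY, hd, -⟩
    exact stable_no_defeat hP htrans₂ hasymm₂ hE hX hY hd
end

section
/- There exists a stratified logic program P and a preference relation < on P such that P has an answer set but (P,<) has no GNO-preferred answer set. -/
variable {A : Type}

/-- Auxiliary: if every rule in `Q` has empty positive body, then `MP Q = Q`. -/
lemma MP_of_emptyPos {A : Type} (Q : Set (Rule A)) (h : ∀ r ∈ Q, r.pos = ∅) :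
    MP Q = Q := by
  have key : {R | PosSat Q R} = {Q} := by
    ext R
    simp only [Set.mem_setOf_eq, Set.mem_singleton_iff]
    constructor
    · rintro ⟨hRQ, hcl⟩
      apply Set.Subset.antisymm hRQ
      intro r hr
      exact hcl r hr (by rw [h r hr]; exact Set.empty_subset _)
    · rintro rfl
      exact ⟨le_refl _, fun r hr _ => hr⟩
  simp [MP, key]

/-- there is a stratified program with an answer set but no
GNO-preferred answer set. -/
theorem exists_stratified_no_gnoPref :
    ∃ (P : Set (Rule ℕ)) (lt : Rule ℕ → Rule ℕ → Prop),
      P.Finite ∧ Stratified P ∧ Transitive lt ∧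
      (∀ r₁ r₂, lt r₁ r₂ → ¬ lt r₂ r₁) ∧
      (∃ S, AnswerSet P S) ∧
      ¬ ∃ S, GNOPrefAnswerSet lt P S := by
  classical
  set r1 : Rule ℕ := ⟨(true, 0), ∅, {(true, 1)}⟩ with hr1
  set r2 : Rule ℕ := ⟨(true, 1), ∅, ∅⟩ with hr2
  have hne : r1 ≠ r2 := by
    intro h
    have := congrArg Rule.head h
    simp [hr1, hr2] at this
  refine ⟨{r1, r2}, fun p q => p = r2 ∧ q = r1, ?_, ?_, ?_, ?_, ?_, ?_⟩
  · exact (Set.finite_singleton r1).insert r2 |>.subset (by simp [Set.pair_comm])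
  · refine ⟨fun l => if l = (true, 1) then 0 else 1, ?_⟩
    rintro r (rfl | rfl)
    · constructor
      · intro l hl; simp [hr1] at hl
      · intro l hl; simp [hr1] at hl; simp [hl, hr1]
    · constructor
      · intro l hl; simp [hr2] at hl
      · intro l hl; simp [hr2] at hl
  · rintro a b c ⟨rfl, rfl⟩ ⟨h, rfl⟩
    exact ⟨rfl, rfl⟩
  · rintro a b ⟨rfl, rfl⟩ ⟨h, _⟩
    exact absurd h hne
  · -- answer set {(true,1)} generated by {r2}
    have hMP2 : MP {r2} = {r2} := MP_of_emptyPos _ (by rintro r rfl; rfl)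
    refine ⟨{(true, 1)}, ?_, ⟨{r2}, ⟨?_, ?_⟩, ?_⟩⟩
    · intro a; rintro ⟨h1, h2⟩
      simp at h1 h2
    · intro r hr; exact Or.inr hr
    · have hred : reduct {r1, r2} {r2} = {r2} := by
        ext r
        simp only [reduct, Set.mem_setOf_eq, Set.mem_insert_iff, Set.mem_singleton_iff]
        constructor
        · rintro ⟨rfl | rfl, hnd⟩
          · exfalso; apply hnd
            exact ⟨(true, 1), by simp [headSet, hr1, hr2]⟩
          · rfl
        · rintro rfl
          refine ⟨Or.inr rfl, ?_⟩
          rintro ⟨l, -, hl⟩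
          simp [hr2] at hl
      rw [hred, hMP2]
    · simp [headSet, hr2]
  · -- no GNO-preferred answer set
    rintro ⟨S, -, R, ⟨⟨hRP, hRgen⟩, hRgno⟩, -⟩
    have hMPP : MP {r1, r2} = {r1, r2} :=
      MP_of_emptyPos _ (by rintro r (rfl | rfl) <;> rfl)
    by_cases h2 : r2 ∈ R
    · -- reduct = {r2}, so R = {r2}
      have hred : reduct {r1, r2} R = {r2} := by
        ext r
        simp only [reduct, Set.mem_setOf_eq, Set.mem_insert_iff, Set.mem_singleton_iff]
        constructor
        · rintro ⟨rfl | rfl, hnd⟩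
          · exfalso; apply hnd
            exact ⟨(true, 1), ⟨r2, h2, rfl⟩, by simp [hr1]⟩
          · rfl
        · rintro rfl
          refine ⟨Or.inr rfl, ?_⟩
          rintro ⟨l, -, hl⟩
          simp [hr2] at hl
      have hR2 : R = {r2} := by
        rw [hRgen, hred, MP_of_emptyPos _ (by rintro r rfl; rfl)]
      -- gnoReduct = {r1, r2}
      have hT : Trules (fun p q => p = r2 ∧ q = r1) r1 R = ∅ := by
        have : {p ∈ R | ¬ (p = r2 ∧ r1 = r1)} = (∅ : Set (Rule ℕ)) := by
          ext p
          simp only [Set.mem_sep_iff, Set.mem_empty_iff_false, iff_false]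
          rintro ⟨hp, hnp⟩
          rw [hR2] at hp
          exact hnp ⟨hp, trivial⟩
        rw [Trules, this, MP_of_emptyPos _ (by rintro r h; exact absurd h (Set.notMem_empty r))]
      have hgno : gnoReduct (fun p q => p = r2 ∧ q = r1) {r1, r2} R = {r1, r2} := by
        ext r
        simp only [gnoReduct, Set.mem_setOf_eq, Set.mem_insert_iff, Set.mem_singleton_iff]
        constructor
        · rintro ⟨h, -⟩; exact h
        · rintro (rfl | rfl)
          · refine ⟨Or.inl rfl, ?_⟩
            rintro ⟨l, -, hl⟩
            rw [hT] at hl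
            simp [headSet] at hl
          · refine ⟨Or.inr rfl, ?_⟩
            rintro ⟨l, hl, -⟩
            simp [hr2] at hl
      rw [hgno, hMPP] at hRgno
      have : r1 ∈ R := hRgno ▸ Or.inl rfl
      rw [hR2] at this
      exact hne this
    · -- reduct = {r1, r2}, so R = {r1,r2} ∋ r2, contradiction
      have hred : reduct {r1, r2} R = {r1, r2} := by
        ext r
        simp only [reduct, Set.mem_setOf_eq, Set.mem_insert_iff, Set.mem_singleton_iff]
        constructor
        · rintro ⟨h, -⟩; exact h
        · rintro (rfl | rfl)
          · refine ⟨Or.inl rfl, ?_⟩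
            rintro ⟨l, ⟨p, hp, hph⟩, hl⟩
            simp [hr1] at hl
            have hp2 := hRP hp
            simp only [Set.mem_insert_iff, Set.mem_singleton_iff] at hp2
            rcases hp2 with rfl | rfl
            · rw [hl] at hph; simp [hr1] at hph
            · exact h2 hp
          · refine ⟨Or.inr rfl, ?_⟩
            rintro ⟨l, -, hl⟩
            simp [hr2] at hl
      rw [hred, hMPP] at hRgen
      exact h2 (hRgen ▸ Or.inr rfl)
end
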